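/- arXiv:1810.09396 — 4 statements merged into one kernel-verified Lean document; each statement's English description precedes it below -/
import Mathlib

section
/- Let S be a sector in ℂ and let φ : S → ℂ be a nonconstant holomorphic function that admits a formal power series φ̂ = Σ_{j=0}^∞ a_j z^j as asymptotic expansion on S, where a_j ≠ 0 for some j ≥ 1. Then the invariance group of φ is finite; that is, the set of germs at 0 of holomorphic functions f, each defined on some open neighborhood U of 0 (depending on f) and satisfying f(0) = 0, f'(0) ≠ 0, f(S ∩ U) ⊆ S ∩ U, and φ(f(z)) = φ(z) for all z ∈ S ∩ U, is a finite subset of the space of germs at 0 of ℂ-valued functions. -/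
open Topology

/-- `S` is a sector with vertex at the origin. -/
def IsSector (S : Set ℂ) : Prop :=
  ∃ R α₁ α₂ : ℝ, 0 < R ∧ α₁ < α₂ ∧
    S = {z : ℂ | 0 < ‖z‖ ∧ ‖z‖ < R ∧ α₁ < z.arg ∧ z.arg < α₂}

/-- `φ` admits the formal power series with coefficients `a` as asymptotic
expansion on `S`. -/
def AsympExpOn (φ : ℂ → ℂ) (S : Set ℂ) (a : ℕ → ℂ) : Prop :=
  ∀ k : ℕ, ∃ A : ℝ, 0 < A ∧ ∀ z ∈ S,
    ‖φ z - ∑ j ∈ Finset.range k, a j * z ^ j‖ ≤ A * ‖z‖ ^ k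

open Filter Finset in
private lemma sector_ne_zero' {S : Set ℂ} (hS : IsSector S) {z : ℂ} (hz : z ∈ S) : z ≠ 0 := by
  obtain ⟨R, α₁, α₂, hR, hα, rfl⟩ := hS
  intro h; simp [h] at hz

open Filter Finset in
private lemma ray_mem_sector' {S : Set ℂ} (hS : IsSector S) {z₀ : ℂ} (hz₀ : z₀ ∈ S) :
    ∀ᶠ t : ℝ in 𝓝[>] 0, (t:ℂ) * z₀ ∈ S := by
  obtain ⟨R, α₁, α₂, hR, hα, rfl⟩ := hS
  obtain ⟨h1, h2, h3, h4⟩ := hz₀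
  filter_upwards [Ioo_mem_nhdsGT one_pos] with t ht
  refine ⟨?_, ?_, ?_, ?_⟩
  · simpa [abs_of_pos ht.1] using mul_pos ht.1 h1
  · have h5 : ‖(t:ℂ) * z₀‖ = t * ‖z₀‖ := by
      simp [abs_of_pos ht.1]
    rw [h5]
    calc t * ‖z₀‖ ≤ 1 * ‖z₀‖ :=
          mul_le_mul_of_nonneg_right ht.2.le h1.le
      _ < R := by simpa using h2
  · rwa [Complex.arg_real_mul z₀ ht.1]
  · rwa [Complex.arg_real_mul z₀ ht.1]

open Filter Finset in
private lemma ray_tendsto' (z₀ : ℂ) :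
    Tendsto (fun t : ℝ => (t:ℂ) * z₀) (𝓝[>] 0) (𝓝 0) := by
  have h : Tendsto (fun t : ℝ => (t:ℂ) * z₀) (𝓝 0) (𝓝 0) := by
    have h : Continuous fun t : ℝ => (t:ℂ) * z₀ := by continuity
    simpa using h.tendsto 0
  exact h.mono_left nhdsWithin_le_nhds

open Filter Finset in
private lemma tendsto_div_self' {f : ℂ → ℂ} (hf : DifferentiableAt ℂ f 0) (hf0 : f 0 = 0)
    {l : Filter ℂ} (hl : l ≤ 𝓝[≠] (0:ℂ)) :
    Tendsto (fun z => f z / z) l (𝓝 (deriv f 0)) := by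
  have h := (hasDerivAt_iff_tendsto_slope.mp hf.hasDerivAt).mono_left hl
  refine h.congr fun z => ?_
  simp [slope_def_field, hf0]

open Filter Finset in
private lemma tendsto_phi_div' {S : Set ℂ} {φ : ℂ → ℂ} {a : ℕ → ℂ} {m : ℕ}
    (hS : IsSector S) (hasymp : AsympExpOn φ S a) (hm : 1 ≤ m)
    (hmin : ∀ j, 1 ≤ j → j < m → a j = 0)
    {l : Filter ℂ} {u : ℂ → ℂ} (hu : Tendsto u l (𝓝 0)) (huS : ∀ᶠ z in l, u z ∈ S) :
    Tendsto (fun z => (φ (u z) - a 0) / (u z) ^ m) l (𝓝 (a m)) := by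
  obtain ⟨A, hA, hbound⟩ := hasymp (m + 1)
  have hsum : ∀ w : ℂ, ∑ j ∈ Finset.range (m+1), a j * w ^ j = a 0 + a m * w ^ m := by
    intro w
    rw [Finset.sum_range_succ]
    congr 1
    have h : ∑ j ∈ Finset.range m, a j * w ^ j = a 0 * w ^ 0 := by
      refine Finset.sum_eq_single_of_mem 0 (Finset.mem_range.2 (by omega)) ?_
      intro j hj hj0
      rw [hmin j (by omega) (Finset.mem_range.1 hj), zero_mul]
    simpa using h
  rw [← tendsto_sub_nhds_zero_iff]
  have habs : Tendsto (fun z => A * ‖u z‖) l (𝓝 0) := by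
    have h : Tendsto (fun z => ‖u z‖) l (𝓝 0) := by
      simpa [Function.comp_def] using (continuous_norm.tendsto 0).comp hu
    simpa using h.const_mul A
  refine squeeze_zero_norm' ?_ habs
  filter_upwards [huS] with z hz
  have hne : u z ≠ 0 := sector_ne_zero' hS hz
  have habsne : ‖u z‖ ≠ 0 := by simpa using hne
  have heq : (φ (u z) - a 0) / (u z) ^ m - a m
      = (φ (u z) - ∑ j ∈ Finset.range (m+1), a j * (u z) ^ j) / (u z) ^ m := by
    rw [hsum]
    field_simp
    ring
  rw [heq]
  have h := hbound (u z) hz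
  calc ‖(φ (u z) - ∑ j ∈ Finset.range (m+1), a j * (u z) ^ j) / (u z) ^ m‖
      = ‖φ (u z) - ∑ j ∈ Finset.range (m+1), a j * (u z) ^ j‖
        / ‖u z‖ ^ m := by
        rw [norm_div, norm_pow]
    _ ≤ (A * ‖u z‖ ^ (m+1)) / ‖u z‖ ^ m := by gcongr
    _ = A * ‖u z‖ := by
        rw [pow_succ]
        field_simp

open Filter Finset in
private lemma key_root' {S : Set ℂ} {φ : ℂ → ℂ} {a : ℕ → ℂ} {m : ℕ}
    (hS : IsSector S) (hasymp : AsympExpOn φ S a) (hm : 1 ≤ m)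
    (ham : a m ≠ 0) (hmin : ∀ j, 1 ≤ j → j < m → a j = 0)
    {z₀ : ℂ} (hz₀ : z₀ ∈ S)
    {U : Set ℂ} {f : ℂ → ℂ} (hUo : IsOpen U) (hU0 : (0:ℂ) ∈ U)
    (hf : DifferentiableOn ℂ f U) (hf0 : f 0 = 0)
    (hmap : ∀ z ∈ S ∩ U, f z ∈ S ∩ U) (hinv : ∀ z ∈ S ∩ U, φ (f z) = φ z) :
    (deriv f 0) ^ m = 1 := by
  set l : Filter ℂ := Filter.map (fun t : ℝ => (t:ℂ) * z₀) (𝓝[>] 0) with hl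
  haveI : l.NeBot := Filter.map_neBot
  have hl0 : l ≤ 𝓝 (0:ℂ) := (ray_tendsto' z₀)
  have hlS : ∀ᶠ z in l, z ∈ S := eventually_map.mpr (ray_mem_sector' hS hz₀)
  have hlU : ∀ᶠ z in l, z ∈ U := hl0 (hUo.mem_nhds hU0)
  have hlne : ∀ᶠ z in l, z ≠ 0 := hlS.mono fun z hz => sector_ne_zero' hS hz
  have hlne' : l ≤ 𝓝[≠] (0:ℂ) :=
    le_inf hl0 (le_principal_iff.2 hlne)
  have hfd : DifferentiableAt ℂ f 0 := hf.differentiableAt (hUo.mem_nhds hU0)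
  have hftend : Tendsto f l (𝓝 0) := by
    have h := hfd.continuousAt.tendsto.mono_left hl0
    rwa [hf0] at h
  have hfS : ∀ᶠ z in l, f z ∈ S ∩ U := by
    filter_upwards [hlS, hlU] with z h1 h2
    exact hmap z ⟨h1, h2⟩
  have lim1 : Tendsto (fun z => (φ z - a 0) / z ^ m) l (𝓝 (a m)) :=
    tendsto_phi_div' hS hasymp hm hmin (tendsto_id'.mpr hl0) hlS
  have lim2 : Tendsto (fun z => ((φ (f z) - a 0) / (f z) ^ m) * (f z / z) ^ m) l
      (𝓝 (a m * (deriv f 0) ^ m)) :=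
    (tendsto_phi_div' hS hasymp hm hmin hftend (hfS.mono fun z h => h.1)).mul
      ((tendsto_div_self' hfd hf0 hlne').pow m)
  have heq : (fun z => (φ z - a 0) / z ^ m)
      =ᶠ[l] (fun z => ((φ (f z) - a 0) / (f z) ^ m) * (f z / z) ^ m) := by
    filter_upwards [hlS, hlU, hlne, hfS] with z h1 h2 hne hfz
    have hfne : f z ≠ 0 := sector_ne_zero' hS hfz.1
    rw [hinv z ⟨h1, h2⟩, div_pow]
    field_simp
  have h0 := tendsto_nhds_unique lim1 (Tendsto.congr' heq.symm lim2)
  have h1 : a m * (deriv f 0) ^ m = a m * 1 := by rw [mul_one]; exact h0.symm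
  exact mul_left_cancel₀ ham h1

open Filter Finset in
private lemma key_inj' {S : Set ℂ} {φ : ℂ → ℂ} {a : ℕ → ℂ} {m : ℕ}
    (hS : IsSector S) (hasymp : AsympExpOn φ S a) (hm : 1 ≤ m)
    (ham : a m ≠ 0) (hmin : ∀ j, 1 ≤ j → j < m → a j = 0)
    {z₀ : ℂ} (hz₀ : z₀ ∈ S)
    {U V : Set ℂ} {f g : ℂ → ℂ} (hUo : IsOpen U) (hU0 : (0:ℂ) ∈ U)
    (hf : DifferentiableOn ℂ f U) (hf0 : f 0 = 0)
    (hmapf : ∀ z ∈ S ∩ U, f z ∈ S ∩ U) (hinvf : ∀ z ∈ S ∩ U, φ (f z) = φ z)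
    (hVo : IsOpen V) (hV0 : (0:ℂ) ∈ V)
    (hg : DifferentiableOn ℂ g V) (hg0 : g 0 = 0)
    (hmapg : ∀ z ∈ S ∩ V, g z ∈ S ∩ V) (hinvg : ∀ z ∈ S ∩ V, φ (g z) = φ z)
    (hd : deriv f 0 = deriv g 0) (hd0 : deriv f 0 ≠ 0) :
    f =ᶠ[𝓝 (0:ℂ)] g := by
  obtain ⟨m', rfl⟩ : ∃ m', m = m' + 1 := ⟨m - 1, by omega⟩
  set c := deriv f 0 with hc
  have hfd : DifferentiableAt ℂ f 0 := hf.differentiableAt (hUo.mem_nhds hU0)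
  have hgd : DifferentiableAt ℂ g 0 := hg.differentiableAt (hVo.mem_nhds hV0)
  have hfa : AnalyticAt ℂ f 0 := hf.analyticAt (hUo.mem_nhds hU0)
  have hga : AnalyticAt ℂ g 0 := hg.analyticAt (hVo.mem_nhds hV0)
  have hha : AnalyticAt ℂ (fun z => f z - g z) 0 := hfa.sub hga
  by_cases horder : analyticOrderAt (fun z => f z - g z) 0 = ⊤
  · have h := analyticOrderAt_eq_top.mp horder
    filter_upwards [h] with z hz
    exact sub_eq_zero.mp hz
  obtain ⟨k, hk⟩ := WithTop.ne_top_iff_exists.mp horder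
  obtain ⟨ψ, hψa, hψ0, hψeq⟩ := (hha.analyticOrderAt_eq_natCast (n := k)).mp hk.symm
  exfalso
  apply hψ0
  have hψev : ∀ᶠ z in 𝓝 (0:ℂ), f z - g z = z ^ k * ψ z := by
    filter_upwards [hψeq] with z hz
    simpa [smul_eq_mul] using hz
  have hk0 : k ≠ 0 := by
    intro h0
    apply hψ0
    have h1 := hψev.self_of_nhds
    rw [h0, hf0, hg0] at h1
    simpa using h1.symm
  obtain ⟨k', rfl⟩ : ∃ k', k = k' + 1 := ⟨k - 1, by omega⟩
  set n := m' + k' + 2 with hn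
  obtain ⟨A, hApos, hbound⟩ := hasymp n
  set l : Filter ℂ := Filter.map (fun t : ℝ => (t:ℂ) * z₀) (𝓝[>] 0) with hldef
  haveI : l.NeBot := Filter.map_neBot
  have hl0 : l ≤ 𝓝 (0:ℂ) := ray_tendsto' z₀
  have hlS : ∀ᶠ z in l, z ∈ S := eventually_map.mpr (ray_mem_sector' hS hz₀)
  have hlU : ∀ᶠ z in l, z ∈ U := hl0 (hUo.mem_nhds hU0)
  have hlV : ∀ᶠ z in l, z ∈ V := hl0 (hVo.mem_nhds hV0)
  have hlne : ∀ᶠ z in l, z ≠ 0 := hlS.mono fun z hz => sector_ne_zero' hS hz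
  have hlne' : l ≤ 𝓝[≠] (0:ℂ) := le_inf hl0 (le_principal_iff.2 hlne)
  have hfS : ∀ᶠ z in l, f z ∈ S := by
    filter_upwards [hlS, hlU] with z h1 h2; exact (hmapf z ⟨h1, h2⟩).1
  have hgS : ∀ᶠ z in l, g z ∈ S := by
    filter_upwards [hlS, hlV] with z h1 h2; exact (hmapg z ⟨h1, h2⟩).1
  have hfdiv : Tendsto (fun z => f z / z) l (𝓝 c) := tendsto_div_self' hfd hf0 hlne'
  have hgdiv : Tendsto (fun z => g z / z) l (𝓝 c) := by
    rw [show (𝓝 c) = 𝓝 (deriv g 0) from by rw [hd]]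
    exact tendsto_div_self' hgd hg0 hlne'
  set Q : ℂ → ℂ := fun z =>
    ∑ j ∈ Finset.range n, a j * ∑ i ∈ Finset.range j, (f z) ^ i * (g z) ^ (j - 1 - i)
    with hQdef
  have hQ : ∀ z : ℂ, (∑ j ∈ Finset.range n, a j * (f z) ^ j)
      - (∑ j ∈ Finset.range n, a j * (g z) ^ j) = (f z - g z) * Q z := by
    intro z
    rw [← Finset.sum_sub_distrib, hQdef, Finset.mul_sum]
    refine Finset.sum_congr rfl fun j _ => ?_
    rw [← mul_sub, ← geom_sum₂_mul]
    ring
  have hQbound : ∀ᶠ z in l, ‖f z - g z‖ * ‖Q z‖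
      ≤ A * (‖f z‖ ^ n + ‖g z‖ ^ n) := by
    filter_upwards [hlS, hlU, hlV, hfS, hgS] with z h1 h2 h3 h4 h5
    have e1 : φ (f z) = φ z := hinvf z ⟨h1, h2⟩
    have e2 : φ (g z) = φ z := hinvg z ⟨h1, h3⟩
    have key : (f z - g z) * Q z
        = (φ (g z) - ∑ j ∈ Finset.range n, a j * (g z) ^ j)
          - (φ (f z) - ∑ j ∈ Finset.range n, a j * (f z) ^ j) := by
      rw [← hQ z, e1, e2]; ring
    rw [← norm_mul, key]
    calc ‖_‖ ≤ ‖φ (g z) - ∑ j ∈ Finset.range n, a j * (g z) ^ j‖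
          + ‖φ (f z) - ∑ j ∈ Finset.range n, a j * (f z) ^ j‖ :=
          norm_sub_le _ _
      _ ≤ A * ‖g z‖ ^ n + A * ‖f z‖ ^ n :=
          add_le_add (hbound _ h5) (hbound _ h4)
      _ = A * (‖f z‖ ^ n + ‖g z‖ ^ n) := by ring
  set u : ℂ → ℂ := fun z => ψ z * (Q z / z ^ m') with hudef
  have husq : ∀ᶠ z in l, ‖u z‖ ≤ A * ((‖f z‖ / ‖z‖) ^ n
      + (‖g z‖ / ‖z‖) ^ n) * ‖z‖ := by
    filter_upwards [hQbound, hψev.filter_mono hl0, hlne] with z hb hev hne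
    have hz : (0:ℝ) < ‖z‖ := by
      simpa using hne
    have e1 : ‖f z - g z‖ = ‖z‖ ^ (k'+1) * ‖ψ z‖ := by
      rw [hev, norm_mul, norm_pow]
    rw [e1] at hb
    have hb2 : ‖ψ z‖ * ‖Q z‖
        ≤ A * (‖f z‖ ^ n + ‖g z‖ ^ n) / ‖z‖ ^ (k'+1) := by
      rw [le_div_iff₀ (by positivity)]
      calc ‖ψ z‖ * ‖Q z‖ * ‖z‖ ^ (k'+1)
          = ‖z‖ ^ (k'+1) * ‖ψ z‖ * ‖Q z‖ := by ring
        _ ≤ _ := hb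
    have hnorm : ‖u z‖ = ‖ψ z‖ * ‖Q z‖ / ‖z‖ ^ m' := by
      simp [hudef, norm_div, norm_pow, mul_div_assoc]
    rw [hnorm]
    calc ‖ψ z‖ * ‖Q z‖ / ‖z‖ ^ m'
        ≤ (A * (‖f z‖ ^ n + ‖g z‖ ^ n) / ‖z‖ ^ (k'+1))
          / ‖z‖ ^ m' := by gcongr
      _ = A * ((‖f z‖ / ‖z‖) ^ n
          + (‖g z‖ / ‖z‖) ^ n) * ‖z‖ := by
          rw [div_pow, div_pow, hn]
          field_simp
          ring
  have habsz : Tendsto (fun z : ℂ => ‖z‖) l (𝓝 0) := by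
    simpa using (continuous_norm.tendsto 0).mono_left hl0
  have hbndt : Tendsto (fun z => A * ((‖f z‖ / ‖z‖) ^ n
      + (‖g z‖ / ‖z‖) ^ n) * ‖z‖) l (𝓝 0) := by
    have hf' : Tendsto (fun z => ‖f z‖ / ‖z‖) l
        (𝓝 (‖c‖)) := by
      have h := (continuous_norm.tendsto c).comp hfdiv
      simpa [Function.comp_def, norm_div] using h
    have hg' : Tendsto (fun z => ‖g z‖ / ‖z‖) l
        (𝓝 (‖c‖)) := by
      have h := (continuous_norm.tendsto c).comp hgdiv
      simpa [Function.comp_def, norm_div] using h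
    have h := (((hf'.pow n).add (hg'.pow n)).const_mul A).mul habsz
    simpa using h
  have hu0 : Tendsto u l (𝓝 0) := squeeze_zero_norm' husq hbndt
  have hsplit : (fun z => Q z / z ^ m') =ᶠ[l]
      (fun z => ∑ j ∈ Finset.range n, a j *
        ((∑ i ∈ Finset.range j, (f z) ^ i * (g z) ^ (j-1-i)) / z ^ m')) := by
    filter_upwards with z
    rw [hQdef, Finset.sum_div]
    exact Finset.sum_congr rfl fun j _ => (mul_div_assoc _ _ _)
  have hQlim : Tendsto (fun z => Q z / z ^ m') l
      (𝓝 (∑ j ∈ Finset.range n,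
        if j = m' + 1 then a (m'+1) * (((m'+1 : ℕ) : ℂ) * c ^ m') else 0)) := by
    refine Tendsto.congr' hsplit.symm ?_
    apply tendsto_finset_sum
    intro j hj
    rcases lt_or_ge j (m'+1) with hjm | hjm
    · have hzero : ∀ z : ℂ, a j *
          ((∑ i ∈ Finset.range j, (f z) ^ i * (g z) ^ (j-1-i)) / z ^ m') = 0 := by
        intro z
        rcases Nat.eq_zero_or_pos j with rfl | hj1
        · simp
        · rw [hmin j hj1 hjm, zero_mul]
      rw [if_neg (by omega)]
      exact tendsto_const_nhds.congr fun z => (hzero z).symm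
    · obtain ⟨d, rfl⟩ : ∃ d, j = (m' + 1) + d := ⟨j - (m'+1), by omega⟩
      have hev : (fun z => a ((m'+1)+d) *
            ((∑ i ∈ Finset.range ((m'+1)+d), (f z) ^ i * (g z) ^ ((m'+1)+d-1-i)) / z ^ m'))
          =ᶠ[l] (fun z => a ((m'+1)+d) * (z ^ d *
            ∑ i ∈ Finset.range ((m'+1)+d), (f z / z) ^ i * (g z / z) ^ ((m'+1)+d-1-i))) := by
        filter_upwards [hlne] with z hz
        congr 1
        rw [Finset.sum_div, Finset.mul_sum]
        refine Finset.sum_congr rfl fun i hi => ?_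
        have hi' : i < (m'+1)+d := Finset.mem_range.1 hi
        have hie : i + ((m'+1)+d-1-i) = m' + d := by omega
        rw [div_pow, div_pow, div_mul_div_comm, ← pow_add, hie, pow_add]
        rw [eq_comm, mul_comm ((z:ℂ) ^ d)]
        rw [div_mul_eq_div_div, div_mul_cancel₀]
        exact pow_ne_zero _ hz
      have hlim2 : Tendsto (fun z => a ((m'+1)+d) * (z ^ d *
            ∑ i ∈ Finset.range ((m'+1)+d), (f z / z) ^ i * (g z / z) ^ ((m'+1)+d-1-i))) l
          (𝓝 (a ((m'+1)+d) * ((0:ℂ) ^ d *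
            ∑ i ∈ Finset.range ((m'+1)+d), c ^ i * c ^ ((m'+1)+d-1-i)))) := by
        apply Tendsto.const_mul
        apply Tendsto.mul
        · exact ((continuous_pow d).tendsto (0:ℂ)).mono_left hl0
        · exact tendsto_finset_sum _ fun i _ => (hfdiv.pow i).mul (hgdiv.pow _)
      have hval : a ((m'+1)+d) * ((0:ℂ) ^ d *
            ∑ i ∈ Finset.range ((m'+1)+d), c ^ i * c ^ ((m'+1)+d-1-i))
          = if (m'+1)+d = m' + 1 then a (m'+1) * (((m'+1 : ℕ) : ℂ) * c ^ m') else 0 := by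
        rcases Nat.eq_zero_or_pos d with rfl | hd1
        · rw [if_pos rfl]
          congr 1
          rw [pow_zero, one_mul]
          have hc' : ∀ i ∈ Finset.range (m'+1+0), c ^ i * c ^ ((m'+1)+0-1-i) = c ^ m' := by
            intro i hi
            rw [← pow_add]
            congr 1
            have := Finset.mem_range.1 hi
            omega
          rw [Finset.sum_congr rfl hc', Finset.sum_const, Finset.card_range, nsmul_eq_mul]
        · rw [if_neg (by omega), zero_pow (by omega), zero_mul, mul_zero]
      rw [← hval]
      exact Tendsto.congr' hev.symm hlim2
  have hsumval : (∑ j ∈ Finset.range n,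
        if j = m' + 1 then a (m'+1) * (((m'+1 : ℕ) : ℂ) * c ^ m') else 0)
      = a (m'+1) * (((m'+1 : ℕ) : ℂ) * c ^ m') := by
    rw [Finset.sum_ite_eq' (Finset.range n) (m'+1)
      (fun _ => a (m'+1) * (((m'+1 : ℕ) : ℂ) * c ^ m'))]
    rw [if_pos (Finset.mem_range.2 (by omega))]
  have hψt : Tendsto ψ l (𝓝 (ψ 0)) := hψa.continuousAt.tendsto.mono_left hl0
  have hu1 : Tendsto u l (𝓝 (ψ 0 * (a (m'+1) * (((m'+1 : ℕ) : ℂ) * c ^ m')))) := by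
    rw [← hsumval]
    exact hψt.mul hQlim
  have hzero := tendsto_nhds_unique hu0 hu1
  have hne2 : a (m'+1) * (((m'+1 : ℕ) : ℂ) * c ^ m') ≠ 0 := by
    refine mul_ne_zero ham (mul_ne_zero ?_ (pow_ne_zero _ hd0))
    exact Nat.cast_ne_zero.2 (Nat.succ_ne_zero m')
  exact (mul_eq_zero.mp hzero.symm).resolve_right hne2

/-- The invariance group of a nonconstant holomorphic function `φ` on a sector `S`
admitting a nonzero asymptotic expansion is finite: the set of germs at `0` of
holomorphic functions `f` fixing `0`, with `f'(0) ≠ 0`, leaving `S` invariant near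
`0` and satisfying `φ ∘ f = φ` near `0` in `S`, is finite. -/
theorem invariance_group_finite (S : Set ℂ) (φ : ℂ → ℂ) (a : ℕ → ℂ)
    (hS : IsSector S) (hφ : DifferentiableOn ℂ φ S)
    (hnonconst : ∃ z ∈ S, ∃ w ∈ S, φ z ≠ φ w)
    (hasymp : AsympExpOn φ S a) (hnonzero : ∃ j : ℕ, 1 ≤ j ∧ a j ≠ 0) :
    {G : (𝓝 (0 : ℂ)).Germ ℂ | ∃ (U : Set ℂ) (f : ℂ → ℂ),
      IsOpen U ∧ (0 : ℂ) ∈ U ∧ DifferentiableOn ℂ f U ∧ f 0 = 0 ∧ deriv f 0 ≠ 0 ∧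
      (∀ z ∈ S ∩ U, f z ∈ S ∩ U) ∧ (∀ z ∈ S ∩ U, φ (f z) = φ z) ∧
      G = (f : (𝓝 (0 : ℂ)).Germ ℂ)}.Finite := by
  classical
  obtain ⟨z₀, hz₀, -⟩ := hnonconst
  set m := Nat.find hnonzero with hmdef
  have hspec := Nat.find_spec hnonzero
  have hm1 : 1 ≤ m := hspec.1
  have ham : a m ≠ 0 := hspec.2
  have hmin : ∀ j, 1 ≤ j → j < m → a j = 0 := by
    intro j h1 h2
    by_contra hne
    exact Nat.find_min hnonzero h2 ⟨h1, hne⟩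
  set D : (𝓝 (0:ℂ)).Germ ℂ → ℂ := fun G => deriv (Quotient.out G) 0 with hD
  have hDcoe : ∀ f : ℂ → ℂ, D ↑f = deriv f 0 := by
    intro f
    have h : (↑(Quotient.out ((f : (𝓝 (0:ℂ)).Germ ℂ))) : (𝓝 (0:ℂ)).Germ ℂ) = ↑f := by
      rw [← Filter.Germ.quot_mk_eq_coe]
      exact Quotient.out_eq _
    exact (Filter.Germ.coe_eq.mp h).deriv_eq
  set T := {G : (𝓝 (0 : ℂ)).Germ ℂ | ∃ (U : Set ℂ) (f : ℂ → ℂ),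
      IsOpen U ∧ (0 : ℂ) ∈ U ∧ DifferentiableOn ℂ f U ∧ f 0 = 0 ∧ deriv f 0 ≠ 0 ∧
      (∀ z ∈ S ∩ U, f z ∈ S ∩ U) ∧ (∀ z ∈ S ∩ U, φ (f z) = φ z) ∧
      G = (f : (𝓝 (0 : ℂ)).Germ ℂ)} with hT
  have himfin : (D '' T).Finite := by
    have hsub : D '' T ⊆ {c : ℂ | c ^ m = 1} := by
      rintro - ⟨G, hG, rfl⟩
      obtain ⟨U, f, hUo, hU0, hf, hf0, hd0, hmap, hinv, rfl⟩ := hG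
      rw [hDcoe f]
      exact key_root' hS hasymp hm1 ham hmin hz₀ hUo hU0 hf hf0 hmap hinv
    refine Set.Finite.subset ?_ hsub
    refine Set.Finite.ofFinset (Polynomial.nthRoots m (1:ℂ)).toFinset ?_
    intro x
    simp [Polynomial.mem_nthRoots (show 0 < m by omega)]
  have hinj : Set.InjOn D T := by
    rintro G₁ hG₁ G₂ hG₂ hDeq
    obtain ⟨U, f, hUo, hU0, hf, hf0, hd0, hmapf, hinvf, rfl⟩ := hG₁
    obtain ⟨V, g, hVo, hV0, hg, hg0, he0, hmapg, hinvg, rfl⟩ := hG₂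
    rw [hDcoe f, hDcoe g] at hDeq
    exact Filter.Germ.coe_eq.mpr
      (key_inj' hS hasymp hm1 ham hmin hz₀ hUo hU0 hf hf0 hmapf hinvf
        hVo hV0 hg hg0 hmapg hinvg hDeq hd0)
  exact Set.Finite.of_finite_image himfin hinj
end

section
/- Let φ̂ = Σ_{j=1}^∞ a_j z^j ∈ ℂ[[z]] be a nonzero formal power series with zero constant coefficient, and let ν = min{j ≥ 1 : a_j ≠ 0}. Then the formal invariance group Inv(φ̂) = {ĝ ∈ ℂ[[z]] : ĝ has zero constant coefficient, ĝ has nonzero linear coefficient, and φ̂ ∘ ĝ = φ̂} is a finite set, and it has exactly ν elements. -/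
/-- Formal substitution `f ∘ g` of a power series `g` (intended to have zero
constant coefficient) into a power series `f`. -/
noncomputable def pscomp (f g : PowerSeries ℂ) : PowerSeries ℂ :=
  PowerSeries.mk fun n =>
    ∑ k ∈ Finset.range (n + 1), (PowerSeries.coeff k f) * (PowerSeries.coeff n (g ^ k))

namespace FormalInvAux

open PowerSeries Finset

lemma coeff_pscomp (f g : PowerSeries ℂ) (n : ℕ) :
    coeff n (pscomp f g) =
      ∑ k ∈ Finset.range (n + 1), (coeff k f) * (coeff n (g ^ k)) := by
  simp [pscomp]

lemma coeff_pow_eq_zero {g : PowerSeries ℂ} (h0 : coeff 0 g = 0) :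
    ∀ k n, n < k → coeff n (g ^ k) = 0 := by
  intro k
  induction k with
  | zero => intro n hn; exact absurd hn (Nat.not_lt_zero n)
  | succ k ih =>
    intro n hn
    rw [pow_succ, coeff_mul]
    apply Finset.sum_eq_zero
    intro p hp
    rw [Finset.HasAntidiagonal.mem_antidiagonal] at hp
    by_cases h : p.1 < k
    · rw [ih p.1 h, zero_mul]
    · have h2 : p.2 = 0 := by omega
      rw [h2, h0, mul_zero]

lemma coeff_pow_self {g : PowerSeries ℂ} (h0 : coeff 0 g = 0) (k : ℕ) :
    coeff k (g ^ k) = (coeff 1 g) ^ k := by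
  induction k with
  | zero => simp
  | succ k ih =>
    rw [pow_succ, coeff_mul, Finset.sum_eq_single (k, 1)]
    · rw [ih, pow_succ]
    · intro p hp hne
      rw [Finset.HasAntidiagonal.mem_antidiagonal] at hp
      rcases lt_trichotomy p.1 k with h | h | h
      · rw [coeff_pow_eq_zero h0 _ _ h, zero_mul]
      · exact absurd (Prod.ext h (by omega)) hne
      · have h2 : p.2 = 0 := by omega
        rw [h2, h0, mul_zero]
    · intro h
      exact absurd (Finset.HasAntidiagonal.mem_antidiagonal.2 (by omega)) h

lemma coeff_pow_congr {g g' : PowerSeries ℂ}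
    (h0 : coeff 0 g = 0) (h0' : coeff 0 g' = 0) :
    ∀ k n, (∀ j, j + k ≤ n + 1 → coeff j g = coeff j g') →
      coeff n (g ^ k) = coeff n (g' ^ k) := by
  intro k
  induction k with
  | zero => intro n _; simp
  | succ k ih =>
    intro n hag
    rw [pow_succ', pow_succ', coeff_mul, coeff_mul]
    apply Finset.sum_congr rfl
    intro p hp
    rw [Finset.HasAntidiagonal.mem_antidiagonal] at hp
    by_cases h2 : p.2 < k
    · rw [coeff_pow_eq_zero h0 _ _ h2, coeff_pow_eq_zero h0' _ _ h2,
        mul_zero, mul_zero]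
    · by_cases h1 : p.1 = 0
      · rw [h1, h0, h0', zero_mul, zero_mul]
      · have e1 : coeff p.1 g = coeff p.1 g' := hag p.1 (by omega)
        have e2 : coeff p.2 (g ^ k) = coeff p.2 (g' ^ k) :=
          ih p.2 (fun j hj => hag j (by omega))
        rw [e1, e2]

lemma coeff_pow_sub {g g' : PowerSeries ℂ}
    (h0 : coeff 0 g = 0) (h0' : coeff 0 g' = 0)
    {m : ℕ} (hm : 1 ≤ m) (hag : ∀ j ≤ m, coeff j g = coeff j g') :
    ∀ k, 1 ≤ k →
      coeff (k + m) (g ^ k) - coeff (k + m) (g' ^ k)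
        = (k : ℂ) * (coeff 1 g) ^ (k - 1) *
            (coeff (m + 1) g - coeff (m + 1) g') := by
  intro k
  induction k with
  | zero => intro hk; exact absurd hk (by omega)
  | succ k ih =>
    intro _
    have hc1 : coeff 1 g' = coeff 1 g := (hag 1 hm).symm
    by_cases hk : k = 0
    · subst hk
      rw [show (0:ℕ) + 1 = 1 by rfl, pow_one, pow_one, show (1:ℕ) + m = m + 1 by omega]
      push_cast
      ring
    · have hk1 : 1 ≤ k := by omega
      rw [pow_succ', pow_succ', coeff_mul, coeff_mul, ← Finset.sum_sub_distrib]
      have hsub : ({((1 : ℕ), k + m), (m + 1, k)} : Finset (ℕ × ℕ)) ⊆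
          Finset.HasAntidiagonal.antidiagonal (k + 1 + m) := by
        intro p hp
        rw [Finset.mem_insert, Finset.mem_singleton] at hp
        rcases hp with h | h <;> subst h <;>
          exact Finset.HasAntidiagonal.mem_antidiagonal.2 (by omega)
      rw [← Finset.sum_subset hsub ?_]
      · have hne : ((1 : ℕ), k + m) ≠ (m + 1, k) := by
          intro h
          have := congrArg Prod.fst h
          simp at this
          omega
        rw [Finset.sum_pair hne]
        have e1 : coeff (k + m) (g ^ k) - coeff (k + m) (g' ^ k)
            = (k : ℂ) * (coeff 1 g) ^ (k - 1) *
              (coeff (m + 1) g - coeff (m + 1) g') := ih hk1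
        have e2 := coeff_pow_self h0 k
        have e3 := coeff_pow_self h0' k
        rw [hc1] at e3
        rw [hc1, e2, e3]
        have hΔ : coeff 1 g * coeff (k + m) (g ^ k)
              - coeff 1 g * coeff (k + m) (g' ^ k)
            = coeff 1 g * ((k : ℂ) * (coeff 1 g) ^ (k - 1) *
              (coeff (m + 1) g - coeff (m + 1) g')) := by
          rw [← mul_sub, e1]
        rw [hΔ]
        have hpow : coeff 1 g * (coeff 1 g) ^ (k - 1) = (coeff 1 g) ^ k := by
          rw [← pow_succ']
          congr 1
          omega
        have hk0 : ((k : ℂ) + 1) = ((k + 1 : ℕ) : ℂ) := by push_cast; ring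
        calc coeff 1 g * ((k : ℂ) * (coeff 1 g) ^ (k - 1) *
              (coeff (m + 1) g - coeff (m + 1) g'))
              + (coeff (m + 1) g * (coeff 1 g) ^ k
                - coeff (m + 1) g' * (coeff 1 g) ^ k)
            = ((k : ℂ) * (coeff 1 g * (coeff 1 g) ^ (k - 1)) + (coeff 1 g) ^ k) *
              (coeff (m + 1) g - coeff (m + 1) g') := by ring
          _ = ((k + 1 : ℕ) : ℂ) * (coeff 1 g) ^ (k + 1 - 1) *
              (coeff (m + 1) g - coeff (m + 1) g') := by
              rw [hpow, show k + 1 - 1 = k by omega]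
              push_cast
              ring
      · intro p hp hnotin
        rw [Finset.HasAntidiagonal.mem_antidiagonal] at hp
        rw [Finset.mem_insert, Finset.mem_singleton] at hnotin
        push_neg at hnotin
        obtain ⟨hn1, hn2⟩ := hnotin
        by_cases hp0 : p.1 = 0
        · rw [hp0, h0, h0', zero_mul, zero_mul, sub_self]
        · by_cases hple : p.1 ≤ m
          · -- p.1 ≥ 1; p.1 = 1 would force p = (1, k+m), contradiction; so 2 ≤ p.1
            have hp2 : 2 ≤ p.1 := by
              rcases Nat.lt_or_ge p.1 2 with h | h
              · exfalso
                apply hn1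
                have : p.1 = 1 := by omega
                exact Prod.ext this (by omega)
              · exact h
            have e1 : coeff p.1 g = coeff p.1 g' := hag p.1 hple
            have e2 : coeff p.2 (g ^ k) = coeff p.2 (g' ^ k) := by
              apply coeff_pow_congr h0 h0'
              intro j hj
              exact hag j (by omega)
            rw [e1, e2, sub_self]
          · -- p.1 ≥ m+1; p.1 = m+1 excluded, so p.2 < k
            have hpge : m + 2 ≤ p.1 := by
              rcases Nat.lt_or_ge p.1 (m + 2) with h | h
              · exfalso
                apply hn2
                have : p.1 = m + 1 := by omega
                exact Prod.ext this (by omega)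
              · exact h
            have hp2k : p.2 < k := by omega
            rw [coeff_pow_eq_zero h0 _ _ hp2k, coeff_pow_eq_zero h0' _ _ hp2k,
              mul_zero, mul_zero, sub_self]

section Main

variable {φ : PowerSeries ℂ} {ν : ℕ}

lemma comp_sub (hν1 : 1 ≤ ν) (hνmin : ∀ j < ν, coeff j φ = 0)
    {g g' : PowerSeries ℂ}
    (h0 : coeff 0 g = 0) (h0' : coeff 0 g' = 0)
    {m : ℕ} (hm : 1 ≤ m) (hag : ∀ j ≤ m, coeff j g = coeff j g') :
    coeff (ν + m) (pscomp φ g) - coeff (ν + m) (pscomp φ g')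
      = (ν : ℂ) * coeff ν φ * (coeff 1 g) ^ (ν - 1) *
          (coeff (m + 1) g - coeff (m + 1) g') := by
  rw [coeff_pscomp, coeff_pscomp, ← Finset.sum_sub_distrib]
  rw [Finset.sum_eq_single ν]
  · rw [← mul_sub, coeff_pow_sub h0 h0' hm hag ν hν1]
    ring
  · intro k hk hne
    rw [Finset.mem_range] at hk
    by_cases hlt : k < ν
    · rw [hνmin k hlt, zero_mul, zero_mul, sub_self]
    · by_cases hk2 : k = ν + m
      · subst hk2
        rw [coeff_pow_self h0, coeff_pow_self h0',
          show coeff 1 g' = coeff 1 g from (hag 1 hm).symm, sub_self]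
      · have e2 : coeff (ν + m) (g ^ k) = coeff (ν + m) (g' ^ k) := by
          apply coeff_pow_congr h0 h0'
          intro j hj
          exact hag j (by omega)
        rw [e2, sub_self]
  · intro h
    exact absurd (Finset.mem_range.2 (by omega)) h

/-- Partial sums of the unique invariance-group element with linear coefficient `c`. -/
noncomputable def gp (φ : PowerSeries ℂ) (ν : ℕ) (c : ℂ) : ℕ → PowerSeries ℂ
  | 0 => 0
  | m + 1 =>
      gp φ ν c m + PowerSeries.C
        (if m = 0 then c else
          (coeff (ν + m) φ - coeff (ν + m) (pscomp φ (gp φ ν c m))) /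
            ((ν : ℂ) * coeff ν φ * c ^ (ν - 1))) * X ^ (m + 1)

variable {c : ℂ}

lemma gp_coeff_zero : ∀ m j, (j = 0 ∨ m < j) → coeff j (gp φ ν c m) = 0 := by
  intro m
  induction m with
  | zero => intro j _; simp [gp]
  | succ m ih =>
    intro j hj
    have hj' : j ≠ m + 1 := by omega
    simp only [gp, map_add, coeff_C_mul, coeff_X_pow, if_neg hj', mul_zero, add_zero]
    exact ih j (by omega)

lemma gp_stable : ∀ m j, j ≤ m → coeff j (gp φ ν c m) = coeff j (gp φ ν c j) := by
  intro m
  induction m with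
  | zero =>
    intro j hj
    have hj0 : j = 0 := by omega
    subst hj0; rfl
  | succ m ih =>
    intro j hj
    by_cases h : j = m + 1
    · rw [h]
    · have hj' : j ≤ m := by omega
      simp only [gp, map_add, coeff_C_mul, coeff_X_pow, if_neg h, mul_zero, add_zero]
      exact ih j hj'

lemma gp_coeff_succ (m : ℕ) :
    coeff (m + 1) (gp φ ν c (m + 1))
      = (if m = 0 then c else
          (coeff (ν + m) φ - coeff (ν + m) (pscomp φ (gp φ ν c m))) /
            ((ν : ℂ) * coeff ν φ * c ^ (ν - 1))) := by
  simp only [gp, map_add, coeff_C_mul, coeff_X_pow, if_pos rfl]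
  rw [gp_coeff_zero m (m + 1) (by omega), zero_add]
  norm_num

/-- The candidate invariance-group element with linear coefficient `c`. -/
noncomputable def gser (φ : PowerSeries ℂ) (ν : ℕ) (c : ℂ) : PowerSeries ℂ :=
  PowerSeries.mk fun j => coeff j (gp φ ν c j)

lemma gser_coeff (j : ℕ) : coeff j (gser φ ν c) = coeff j (gp φ ν c j) := by
  simp [gser]

lemma gser_coeff_zero : coeff 0 (gser φ ν c) = 0 := by
  rw [gser_coeff]
  exact gp_coeff_zero 0 0 (Or.inl rfl)

lemma gser_coeff_one : coeff 1 (gser φ ν c) = c := by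
  rw [gser_coeff, show (1 : ℕ) = 0 + 1 from rfl, gp_coeff_succ, if_pos rfl]

lemma gser_agree (m j : ℕ) (hj : j ≤ m) :
    coeff j (gser φ ν c) = coeff j (gp φ ν c m) := by
  rw [gser_coeff, gp_stable m j hj]

lemma comp_gser (hν1 : 1 ≤ ν) (hνne : coeff ν φ ≠ 0)
    (hνmin : ∀ j < ν, coeff j φ = 0) (hc : c ^ ν = 1) :
    pscomp φ (gser φ ν c) = φ := by
  have hc0 : c ≠ 0 := by
    intro h
    rw [h, zero_pow (by omega)] at hc
    exact one_ne_zero hc.symm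
  have hD : (ν : ℂ) * coeff ν φ * c ^ (ν - 1) ≠ 0 :=
    mul_ne_zero (mul_ne_zero (Nat.cast_ne_zero.2 (by omega)) hνne)
      (pow_ne_zero _ hc0)
  ext n
  rcases Nat.lt_or_ge n ν with hn | hn
  · rw [coeff_pscomp, hνmin n hn]
    apply Finset.sum_eq_zero
    intro k hk
    rw [Finset.mem_range] at hk
    rw [hνmin k (by omega), zero_mul]
  · rcases Nat.eq_or_lt_of_le hn with hn' | hn'
    · -- n = ν
      subst hn'
      rw [coeff_pscomp, Finset.sum_eq_single ν]
      · rw [coeff_pow_self gser_coeff_zero, gser_coeff_one, hc, mul_one]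
      · intro k hk hne
        rw [Finset.mem_range] at hk
        rw [hνmin k (by omega), zero_mul]
      · intro h
        exact absurd (Finset.mem_range.2 (by omega)) h
    · -- n = ν + m with m ≥ 1
      obtain ⟨m, hm1, rfl⟩ : ∃ m, 1 ≤ m ∧ n = ν + m := ⟨n - ν, by omega, by omega⟩
      have h0' : coeff 0 (gp φ ν c m) = 0 := gp_coeff_zero m 0 (Or.inl rfl)
      have hag : ∀ j ≤ m, coeff j (gser φ ν c) = coeff j (gp φ ν c m) :=
        fun j hj => gser_agree m j hj
      have key := comp_sub hν1 hνmin gser_coeff_zero h0' hm1 hag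
      rw [gser_coeff_one] at key
      have hgm1 : coeff (m + 1) (gp φ ν c m) = 0 := gp_coeff_zero m (m + 1) (by omega)
      have hgs : coeff (m + 1) (gser φ ν c)
          = (coeff (ν + m) φ - coeff (ν + m) (pscomp φ (gp φ ν c m))) /
              ((ν : ℂ) * coeff ν φ * c ^ (ν - 1)) := by
        rw [gser_coeff, gp_coeff_succ m, if_neg (by omega)]
      rw [hgs, hgm1, sub_zero] at key
      have : coeff (ν + m) (pscomp φ (gser φ ν c))
          = coeff (ν + m) (pscomp φ (gp φ ν c m))
            + ((ν : ℂ) * coeff ν φ * c ^ (ν - 1)) *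
              ((coeff (ν + m) φ - coeff (ν + m) (pscomp φ (gp φ ν c m))) /
                ((ν : ℂ) * coeff ν φ * c ^ (ν - 1))) := by
        linear_combination key
      rw [this, mul_div_cancel₀ _ hD]
      ring

lemma root_of_mem (hνne : coeff ν φ ≠ 0) (hνmin : ∀ j < ν, coeff j φ = 0)
    {g : PowerSeries ℂ} (h0 : coeff 0 g = 0) (hcomp : pscomp φ g = φ) :
    (coeff 1 g) ^ ν = 1 := by
  have h := congrArg (coeff ν) hcomp
  rw [coeff_pscomp, Finset.sum_eq_single ν] at h
  · rw [coeff_pow_self h0] at h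
    exact mul_left_cancel₀ hνne (by rw [h, mul_one])
  · intro k hk hne
    rw [Finset.mem_range] at hk
    rw [hνmin k (by omega), zero_mul]
  · intro hmem
    exact absurd (Finset.mem_range.2 (by omega)) hmem

lemma uniqueness (hν1 : 1 ≤ ν) (hνne : coeff ν φ ≠ 0)
    (hνmin : ∀ j < ν, coeff j φ = 0)
    {g g' : PowerSeries ℂ}
    (h0 : coeff 0 g = 0) (h0' : coeff 0 g' = 0)
    (h1 : coeff 1 g = coeff 1 g') (h1ne : coeff 1 g ≠ 0)
    (hcomp : pscomp φ g = φ) (hcomp' : pscomp φ g' = φ) : g = g' := by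
  have key : ∀ n, coeff n g = coeff n g' := by
    intro n
    induction n using Nat.strong_induction_on with
    | _ n ih =>
      match n with
      | 0 => rw [h0, h0']
      | 1 => exact h1
      | (m + 2) =>
        have hag : ∀ j ≤ m + 1, coeff j g = coeff j g' :=
          fun j hj => ih j (by omega)
        have hsub := comp_sub hν1 hνmin h0 h0' (m := m + 1) (by omega) hag
        rw [hcomp, hcomp', sub_self] at hsub
        have hD : (ν : ℂ) * coeff ν φ * (coeff 1 g) ^ (ν - 1) ≠ 0 :=
          mul_ne_zero (mul_ne_zero (Nat.cast_ne_zero.2 (by omega)) hνne)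
            (pow_ne_zero _ h1ne)
        have h2 := (mul_eq_zero.1 hsub.symm).resolve_left hD
        exact sub_eq_zero.1 h2
  exact PowerSeries.ext key

end Main

end FormalInvAux

open PowerSeries FormalInvAux in
/-- The formal invariance group of a nonzero formal power series `φ̂` of order `ν`
(vanishing constant term) is finite, of cardinality exactly `ν`. -/
theorem formal_invariance_group_finite (φ : PowerSeries ℂ) (ν : ℕ)
    (h0 : PowerSeries.coeff 0 φ = 0) (hφ : φ ≠ 0)
    (hν1 : 1 ≤ ν) (hνne : PowerSeries.coeff ν φ ≠ 0)
    (hνmin : ∀ j < ν, PowerSeries.coeff j φ = 0) :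
    {g : PowerSeries ℂ | PowerSeries.coeff 0 g = 0 ∧ PowerSeries.coeff 1 g ≠ 0 ∧
        pscomp φ g = φ}.Finite ∧
      {g : PowerSeries ℂ | PowerSeries.coeff 0 g = 0 ∧ PowerSeries.coeff 1 g ≠ 0 ∧
        pscomp φ g = φ}.ncard = ν := by
  set S := {g : PowerSeries ℂ | PowerSeries.coeff 0 g = 0 ∧ PowerSeries.coeff 1 g ≠ 0 ∧
      pscomp φ g = φ} with hS
  set R := {c : ℂ | c ^ ν = 1} with hR
  have hmemG : ∀ c ∈ R, gser φ ν c ∈ S := by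
    intro c hc
    have hc0 : c ≠ 0 := by
      intro h
      rw [hR, Set.mem_setOf_eq, h, zero_pow (show ν ≠ 0 by omega)] at hc
      exact one_ne_zero hc.symm
    refine ⟨gser_coeff_zero, ?_, comp_gser hν1 hνne hνmin hc⟩
    rw [gser_coeff_one]
    exact hc0
  have hSimg : S = (fun c => gser φ ν c) '' R := by
    ext g
    constructor
    · rintro ⟨hg0, hg1, hgc⟩
      have hc : (coeff 1 g) ^ ν = 1 := root_of_mem hνne hνmin hg0 hgc
      refine ⟨coeff 1 g, hc, ?_⟩
      have hmem := hmemG _ hc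
      exact (uniqueness hν1 hνne hνmin gser_coeff_zero hg0
        (by rw [gser_coeff_one]) (by rw [gser_coeff_one]; exact hg1)
        hmem.2.2 hgc)
    · rintro ⟨c, hc, rfl⟩
      exact hmemG c hc
  have hinj : Set.InjOn (fun c => gser φ ν c) R := by
    intro c₁ _ c₂ _ h
    have := congrArg (coeff 1) h
    rwa [gser_coeff_one, gser_coeff_one] at this
  obtain ⟨ζ, hζ⟩ : ∃ ζ : ℂ, IsPrimitiveRoot ζ ν :=
    ⟨_, Complex.isPrimitiveRoot_exp ν (by omega)⟩
  have hRfin : R = ↑(Polynomial.nthRootsFinset ν (1 : ℂ)) := by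
    ext c
    rw [hR, Set.mem_setOf_eq, Finset.mem_coe,
      Polynomial.mem_nthRootsFinset (by omega)]
  have hRF : R.Finite := by rw [hRfin]; exact (Polynomial.nthRootsFinset ν (1 : ℂ)).finite_toSet
  have hcard : R.ncard = ν := by
    rw [hRfin, Set.ncard_coe_finset, hζ.card_nthRootsFinset]
  constructor
  · rw [hSimg]; exact hRF.image _
  · rw [hSimg, Set.ncard_image_of_injOn hinj, hcard]
end

section
/- For x ∈ ℂ with Re(x) > 0, define E(x) = ∫_0^{+∞} e^{−ξ/x}/(1 + ξ) dξ. Then E admits the Euler series Σ_{n=0}^∞ (−1)^n n! x^{n+1} as asymptotic expansion on the right half-plane in the following sense: for every real number c with 0 < c ≤ 1 and every k ∈ ℕ there exists a constant A > 0 such that |E(x) − Σ_{n=0}^{k−1} (−1)^n n! x^{n+1}| ≤ A·|x|^{k+1} for every x ∈ ℂ ∖ {0} with Re(x) ≥ c·|x|. -/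
open MeasureTheory Set Filter Real Complex

-- real integrability
lemma intOn_pow_mul_exp_real (n : ℕ) {r : ℝ} (hr : 0 < r) :
    IntegrableOn (fun t : ℝ => t ^ n * Real.exp (-(r * t))) (Ioi 0) := by
  have := integrableOn_rpow_mul_exp_neg_mul_rpow (p := 1) (s := n) (b := r)
    (by exact lt_of_lt_of_le neg_one_lt_zero (Nat.cast_nonneg n)) one_pos hr
  refine this.congr_fun (fun t ht => ?_) measurableSet_Ioi
  dsimp only
  rw [Real.rpow_natCast, Real.rpow_one, neg_mul]

-- complex integrability
lemma intOn_pow_mul_exp (n : ℕ) {b : ℂ} (hb : 0 < b.re) :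
    IntegrableOn (fun t : ℝ => (t : ℂ) ^ n * Complex.exp (-b * t)) (Ioi 0) := by
  refine Integrable.mono' (intOn_pow_mul_exp_real n hb) ?_ ?_
  · apply ContinuousOn.aestronglyMeasurable ?_ measurableSet_Ioi
    fun_prop
  · filter_upwards [ae_restrict_mem measurableSet_Ioi] with t ht
    rw [mem_Ioi] at ht
    rw [norm_mul, norm_pow]
    simp only [Complex.norm_exp, Complex.norm_real, Real.norm_eq_abs,
      abs_of_pos ht]
    have h : (-b * (t : ℂ)).re = -(b.re * t) := by
      simp [Complex.mul_re]
    rw [h]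

lemma tendsto_pow_mul_cexp_zero (n : ℕ) {b : ℂ} (hb : 0 < b.re) :
    Tendsto (fun t : ℝ => (t : ℂ) ^ n * Complex.exp (-b * t)) atTop (nhds 0) := by
  apply squeeze_zero_norm' ?_ (tendsto_rpow_mul_exp_neg_mul_atTop_nhds_zero n b.re hb)
  filter_upwards [eventually_gt_atTop (0 : ℝ)] with t ht
  rw [norm_mul, norm_pow]
  simp only [Complex.norm_exp, Complex.norm_real, Real.norm_eq_abs, abs_of_pos ht]
  have h : (-b * (t : ℂ)).re = -b.re * t := by simp [Complex.mul_re]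
  rw [h, Real.rpow_natCast]

lemma hasDerivAt_pow_cexp (n : ℕ) (b : ℂ) (t : ℝ) :
    HasDerivAt (fun t : ℝ => (t : ℂ) ^ n * Complex.exp (-b * t))
      ((n : ℂ) * ((t : ℂ) ^ (n - 1) * Complex.exp (-b * t))
        - b * ((t : ℂ) ^ n * Complex.exp (-b * t))) t := by
  have hexp : HasDerivAt (fun z : ℂ => Complex.exp (-b * z))
      (Complex.exp (-b * t) * (-b)) (t : ℂ) :=
    by simpa using ((hasDerivAt_id (t : ℂ)).const_mul (-b)).cexp
  have H := ((hasDerivAt_pow n (t : ℂ)).mul hexp).comp_ofReal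
  exact H.congr_deriv (by ring)

lemma integral_deriv_pow_cexp (n : ℕ) {b : ℂ} (hb : 0 < b.re) :
    (n : ℂ) * (∫ t in Ioi (0 : ℝ), (t : ℂ) ^ (n - 1) * Complex.exp (-b * t))
      - b * (∫ t in Ioi (0 : ℝ), (t : ℂ) ^ n * Complex.exp (-b * t)) = -(0 : ℂ) ^ n := by
  have key := integral_Ioi_of_hasDerivAt_of_tendsto
    (f := fun t : ℝ => (t : ℂ) ^ n * Complex.exp (-b * t))
    (f' := fun t : ℝ => (n : ℂ) * ((t : ℂ) ^ (n - 1) * Complex.exp (-b * t))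
        - b * ((t : ℂ) ^ n * Complex.exp (-b * t)))
    (a := 0) (m := 0)
    (Continuous.continuousWithinAt (by fun_prop))
    (fun t _ => hasDerivAt_pow_cexp n b t)
    (((intOn_pow_mul_exp (n - 1) hb).const_mul _).sub ((intOn_pow_mul_exp n hb).const_mul b))
    (tendsto_pow_mul_cexp_zero n hb)
  rw [integral_sub ((intOn_pow_mul_exp (n - 1) hb).const_mul _)
      ((intOn_pow_mul_exp n hb).const_mul b),
    integral_const_mul, integral_const_mul] at key
  refine key.trans ?_
  norm_num

lemma integral_pow_mul_cexp (n : ℕ) {b : ℂ} (hb : 0 < b.re) :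
    ∫ t in Ioi (0 : ℝ), (t : ℂ) ^ n * Complex.exp (-b * t) = n.factorial / b ^ (n + 1) := by
  have hb0 : b ≠ 0 := fun h => by simp [h] at hb
  induction n with
  | zero =>
      have h := integral_deriv_pow_cexp 0 hb
      rw [Nat.cast_zero, zero_mul] at h
      have hbI : b * (∫ t in Ioi (0 : ℝ), (t : ℂ) ^ 0 * Complex.exp (-b * t)) = 1 := by
        linear_combination -h
      rw [eq_div_iff (pow_ne_zero _ hb0)]
      simpa [mul_comm] using hbI
  | succ n ih =>
      have h := integral_deriv_pow_cexp (n + 1) hb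
      rw [Nat.add_sub_cancel] at h
      rw [ih] at h
      have h0 : (-(0 : ℂ) ^ (n + 1)) = 0 := by simp
      rw [h0, sub_eq_zero] at h
      push_cast at h
      field_simp at h
      rw [eq_div_iff (pow_ne_zero _ hb0)]
      push_cast [Nat.factorial_succ]
      simp only [neg_mul] at h ⊢
      linear_combination -h

lemma one_add_ne (ξ : ℝ) (hξ : 0 < ξ) : (1 : ℂ) + ξ ≠ 0 := by
  intro h
  have := congrArg Complex.re h
  simp at this
  linarith

lemma norm_one_add_ge (ξ : ℝ) (hξ : 0 < ξ) : (1 : ℝ) ≤ ‖(1 + ξ : ℂ)‖ := by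
  have := Complex.re_le_norm (1 + (ξ : ℝ) : ℂ)
  simp only [Complex.add_re, Complex.one_re, Complex.ofReal_re] at this
  linarith

set_option maxRecDepth 8000 in
/-- The Euler function `E(x) = ∫₀^∞ e^{-ξ/x}/(1+ξ) dξ` admits the Euler series
`Σ (-1)ⁿ n! x^{n+1}` as asymptotic expansion on every closed subsector
`{Re x ≥ c|x|}` of the right half-plane. -/
theorem euler_function_asymptotic_expansion :
    ∀ c : ℝ, 0 < c → c ≤ 1 → ∀ k : ℕ, ∃ A : ℝ, 0 < A ∧
      ∀ x : ℂ, x ≠ 0 → c * ‖x‖ ≤ x.re →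
        ‖(∫ ξ in Set.Ioi (0 : ℝ), Complex.exp (-(ξ : ℂ) / x) / (1 + (ξ : ℂ))) -
            ∑ n ∈ Finset.range k, (-1 : ℂ) ^ n * (n.factorial : ℂ) * x ^ (n + 1)‖
          ≤ A * ‖x‖ ^ (k + 1) := by
  intro c hc hc1 k
  refine ⟨k.factorial / c ^ (k + 1), by positivity, fun x hx0 hcx => ?_⟩
  have habs : 0 < ‖x‖ := norm_pos_iff.mpr hx0
  have hxre : 0 < x.re := lt_of_lt_of_le (by positivity) hcx
  set b : ℂ := x⁻¹ with hb
  have hbre : 0 < b.re := by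
    rw [hb, Complex.inv_re]
    exact div_pos hxre (Complex.normSq_pos.mpr hx0)
  set f : ℝ → ℂ := fun ξ => Complex.exp (-b * ξ) / (1 + ξ) with hf
  set r0 : ℝ → ℂ := fun ξ => (ξ : ℂ) ^ k * Complex.exp (-b * ξ) / (1 + ξ) with hr0
  have hmeas : ∀ m : ℕ, AEStronglyMeasurable
      (fun ξ : ℝ => (ξ : ℂ) ^ m * Complex.exp (-b * ξ) / (1 + ξ))
      (volume.restrict (Ioi 0)) := by
    intro m
    apply ContinuousOn.aestronglyMeasurable ?_ measurableSet_Ioi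
    apply ContinuousOn.div (by fun_prop) (by fun_prop)
    exact fun ξ hξ => one_add_ne ξ hξ
  have hbound : ∀ m : ℕ, ∀ᵐ ξ : ℝ ∂(volume.restrict (Ioi 0)),
      ‖(ξ : ℂ) ^ m * Complex.exp (-b * ξ) / (1 + ξ)‖ ≤ ξ ^ m * Real.exp (-(b.re * ξ)) := by
    intro m
    filter_upwards [ae_restrict_mem measurableSet_Ioi] with ξ hξ
    rw [mem_Ioi] at hξ
    rw [norm_div, norm_mul, norm_pow]
    simp only [Complex.norm_exp, Complex.norm_real, Real.norm_eq_abs, abs_of_pos hξ]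
    have h1 : (-b * (ξ : ℂ)).re = -(b.re * ξ) := by simp [Complex.mul_re]
    rw [h1]
    calc ξ ^ m * Real.exp (-(b.re * ξ)) / ‖(1 + ξ : ℂ)‖
        ≤ ξ ^ m * Real.exp (-(b.re * ξ)) / 1 := by
          apply div_le_div_of_nonneg_left (by positivity) one_pos (norm_one_add_ge ξ hξ)
      _ = ξ ^ m * Real.exp (-(b.re * ξ)) := by rw [div_one]
  have hint : ∀ m : ℕ, IntegrableOn
      (fun ξ : ℝ => (ξ : ℂ) ^ m * Complex.exp (-b * ξ) / (1 + ξ)) (Ioi 0) := fun m =>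
    Integrable.mono' (intOn_pow_mul_exp_real m hbre) (hmeas m) (hbound m)
  have hintf : IntegrableOn f (Ioi 0) := by
    have := hint 0; simpa [hf] using this
  have hintr : IntegrableOn r0 (Ioi 0) := hint k
  have hgn : ∀ n : ℕ, (∫ ξ in Ioi (0 : ℝ), (ξ : ℂ) ^ n * Complex.exp (-b * ξ))
      = (n.factorial : ℂ) * x ^ (n + 1) := by
    intro n
    rw [integral_pow_mul_cexp n hbre, hb, inv_pow]
    field_simp
  have hEeq : (∫ ξ in Ioi (0 : ℝ), Complex.exp (-(ξ : ℂ) / x) / (1 + (ξ : ℂ)))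
      = ∫ ξ in Ioi (0 : ℝ), f ξ := by
    refine setIntegral_congr_fun measurableSet_Ioi (fun ξ _ => ?_)
    rw [hf]
    congr 1
    rw [show -(ξ : ℂ) / x = -x⁻¹ * ξ by ring]
  have key : (∫ ξ in Ioi (0 : ℝ), f ξ)
      - ∑ n ∈ Finset.range k, (-1 : ℂ) ^ n * (n.factorial : ℂ) * x ^ (n + 1)
      = ∫ ξ in Ioi (0 : ℝ), (-1 : ℂ) ^ k * r0 ξ := by
    have hsum : ∑ n ∈ Finset.range k, (-1 : ℂ) ^ n * (n.factorial : ℂ) * x ^ (n + 1)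
        = ∫ ξ in Ioi (0 : ℝ), ∑ n ∈ Finset.range k,
            (-1 : ℂ) ^ n * ((ξ : ℂ) ^ n * Complex.exp (-b * ξ)) := by
      rw [integral_finset_sum _ (fun n _ => (intOn_pow_mul_exp n hbre).const_mul _)]
      refine Finset.sum_congr rfl (fun n _ => ?_)
      rw [integral_const_mul, hgn n, mul_assoc]
    rw [hsum, ← integral_sub hintf
      (integrable_finset_sum _ (fun n _ => (intOn_pow_mul_exp n hbre).const_mul _))]
    refine setIntegral_congr_fun measurableSet_Ioi (fun ξ hξ => ?_)
    rw [mem_Ioi] at hξ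
    have h1 : (1 : ℂ) + ξ ≠ 0 := one_add_ne ξ hξ
    have geo : (∑ n ∈ Finset.range k, (-1 : ℂ) ^ n * (ξ : ℂ) ^ n) * ((ξ : ℂ) + 1)
        = 1 - (-1 : ℂ) ^ k * (ξ : ℂ) ^ k := by
      have h := geom_sum_mul (-(ξ : ℂ)) k
      have hrw : ∀ n : ℕ, (-(ξ : ℂ)) ^ n = (-1 : ℂ) ^ n * (ξ : ℂ) ^ n :=
        fun n => neg_pow (ξ : ℂ) n
      rw [Finset.sum_congr rfl (fun n _ => hrw n), hrw k] at h
      linear_combination -h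
    have hS : (∑ n ∈ Finset.range k, (-1 : ℂ) ^ n * ((ξ : ℂ) ^ n * Complex.exp (-b * ξ)))
        = (∑ n ∈ Finset.range k, (-1 : ℂ) ^ n * (ξ : ℂ) ^ n) * Complex.exp (-b * ξ) := by
      rw [Finset.sum_mul]
      exact Finset.sum_congr rfl (fun n _ => by ring)
    rw [hf, hr0, hS]
    simp only [neg_mul]
    field_simp
    linear_combination -geo
  rw [hEeq, key]
  have hrebound : c / ‖x‖ ≤ b.re := by
    rw [hb, Complex.inv_re, Complex.normSq_eq_norm_sq]
    rw [div_le_div_iff₀ habs (by positivity)]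
    nlinarith
  have hval : (∫ t in Ioi (0 : ℝ), t ^ k * Real.exp (-(b.re * t)))
      = (1 / b.re) ^ (k + 1) * (k.factorial : ℝ) := by
    have h := integral_rpow_mul_exp_neg_mul_Ioi (a := (k : ℝ) + 1) (by positivity) hbre
    rw [Real.Gamma_nat_eq_factorial] at h
    rw [show ((k : ℝ) + 1) = ((k + 1 : ℕ) : ℝ) by push_cast; ring, Real.rpow_natCast] at h
    rw [← h]
    refine setIntegral_congr_fun measurableSet_Ioi (fun t ht => ?_)
    rw [mem_Ioi] at ht
    rw [show ((k + 1 : ℕ) : ℝ) - 1 = (k : ℝ) by push_cast; ring, Real.rpow_natCast]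
  have step1 : ‖∫ ξ in Ioi (0 : ℝ), (-1 : ℂ) ^ k * r0 ξ‖
      ≤ (1 / b.re) ^ (k + 1) * (k.factorial : ℝ) := by
    rw [integral_const_mul, norm_mul, norm_pow, norm_neg, norm_one,
      one_pow, one_mul]
    rw [← hval]
    exact norm_integral_le_of_norm_le (intOn_pow_mul_exp_real k hbre) (hbound k)
  refine step1.trans ?_
  have h3 : 1 / b.re ≤ ‖x‖ / c := by
    rw [div_le_div_iff₀ hbre hc, one_mul]
    rw [div_le_iff₀ habs] at hrebound
    nlinarith
  calc (1 / b.re) ^ (k + 1) * (k.factorial : ℝ)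
      ≤ (‖x‖ / c) ^ (k + 1) * (k.factorial : ℝ) := by
        gcongr
    _ = (k.factorial : ℝ) / c ^ (k + 1) * ‖x‖ ^ (k + 1) := by
        rw [div_pow]; ring
end

section
/- Let S₁ and S₂ be sectors in ℂ, let U be an open neighborhood of 0 in ℂ, and let f : U → ℂ be holomorphic with f(0) = 0 and f'(0) ≠ 0, satisfying f(S₂ ∩ U) ⊆ S₁. Let φ : S₁ → ℂ be holomorphic and admit a nonzero formal power series φ̂ ∈ ℂ[[z]] as asymptotic expansion on S₁, and let f̂ ∈ ℂ[[z]] denote the Taylor series of f at 0 (which has zero constant coefficient). Then the formal substitution φ̂ ∘ f̂ is nonzero, and there exists r > 0 such that the composition φ ∘ f, restricted to S₂ ∩ {z : 0 < |z| < r}, admits φ̂ ∘ f̂ as asymptotic expansion. -/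
open PowerSeries

lemma coeff_pow_zero_of_lt {g : PowerSeries ℂ} (hg : PowerSeries.constantCoeff g = 0)
    {n j : ℕ} (h : n < j) : PowerSeries.coeff n (g ^ j) = 0 := by
  have : (PowerSeries.X : PowerSeries ℂ) ^ j ∣ g ^ j :=
    pow_dvd_pow_of_dvd (PowerSeries.X_dvd_iff.mpr hg) j
  exact (PowerSeries.X_pow_dvd_iff.mp this) n h

lemma coeff_pow_self {g : PowerSeries ℂ} (hg : PowerSeries.constantCoeff g = 0)
    (j : ℕ) : PowerSeries.coeff j (g ^ j) = (PowerSeries.coeff 1 g) ^ j := by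
  obtain ⟨h, rfl⟩ := PowerSeries.X_dvd_iff.mpr hg
  have h1 : PowerSeries.coeff j ((PowerSeries.X : PowerSeries ℂ) ^ j * h ^ j)
      = PowerSeries.coeff 0 (h ^ j) := by
    simpa using PowerSeries.coeff_X_pow_mul (h ^ j) j 0
  have h2 : PowerSeries.coeff 1 ((PowerSeries.X : PowerSeries ℂ) * h)
      = PowerSeries.coeff 0 h := PowerSeries.coeff_succ_X_mul 0 h
  rw [mul_pow, h1, h2]; simp [PowerSeries.coeff_zero_eq_constantCoeff, map_pow]

lemma coeff_pow_congr {p q : PowerSeries ℂ} {k : ℕ}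
    (h : ∀ n < k, PowerSeries.coeff n p = PowerSeries.coeff n q) (j : ℕ) :
    ∀ n < k, PowerSeries.coeff n (p ^ j) = PowerSeries.coeff n (q ^ j) := by
  have hd : (PowerSeries.X : PowerSeries ℂ) ^ k ∣ p - q := by
    rw [PowerSeries.X_pow_dvd_iff]
    intro m hm; rw [map_sub, h m hm, sub_self]
  have : (PowerSeries.X : PowerSeries ℂ) ^ k ∣ p ^ j - q ^ j :=
    dvd_trans hd (sub_dvd_pow_sub_pow p q j)
  intro n hn
  have := (PowerSeries.X_pow_dvd_iff.mp this) n hn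
  rw [map_sub, sub_eq_zero] at this; exact this

lemma taylor_remainder {f : ℂ → ℂ} {σ : ℝ} (hσ : 0 < σ)
    (hf : DifferentiableOn ℂ f (Metric.ball 0 (3 * σ))) (k : ℕ) :
    ∃ C : ℝ, 0 < C ∧ ∀ z : ℂ, norm z ≤ σ →
      norm (f z - ∑ n ∈ Finset.range k, (iteratedDeriv n f 0 / n.factorial) * z ^ n)
        ≤ C * norm z ^ k := by
  set c : ℕ → ℂ := fun n => iteratedDeriv n f 0 / n.factorial with hc
  have hsum : ∀ z : ℂ, norm z ≤ 2 * σ → HasSum (fun n => c n * z ^ n) (f z) := by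
    intro z hz
    have hzb : z ∈ Metric.ball (0 : ℂ) (3 * σ) := by
      rw [Metric.mem_ball, dist_zero_right]; linarith
    have h := Complex.hasSum_taylorSeries_on_ball hf hzb
    have he : (fun n : ℕ => (n.factorial : ℂ)⁻¹ • (z - 0) ^ n • iteratedDeriv n f 0)
        = fun n => c n * z ^ n := by
      funext n; simp only [smul_eq_mul, sub_zero, hc, div_eq_mul_inv]; ring
    rwa [he] at h
  -- bound on coefficients
  have hw : norm ((2 * σ : ℝ) : ℂ) ≤ 2 * σ := by
    rw [Complex.norm_real, Real.norm_eq_abs, abs_of_pos (by linarith)]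
  have hsummable := (hsum _ hw).summable
  have htends : Filter.Tendsto (fun n => norm (c n) * (2 * σ) ^ n)
      Filter.atTop (nhds 0) := by
    have h0 := hsummable.tendsto_atTop_zero
    have h1 : Filter.Tendsto (fun n => ‖c n * ((2 * σ : ℝ) : ℂ) ^ n‖) Filter.atTop (nhds 0) := by
      simpa using h0.norm
    have he : (fun n => ‖c n * ((2 * σ : ℝ) : ℂ) ^ n‖)
        = fun n => norm (c n) * (2 * σ) ^ n := by
      funext n
      rw [norm_mul, norm_pow, Complex.norm_real, Real.norm_eq_abs, abs_of_pos (by linarith)]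
    rwa [he] at h1
  obtain ⟨M0, hM0⟩ := htends.bddAbove_range
  set M : ℝ := max M0 1 with hM
  have hMpos : 0 < M := lt_of_lt_of_le one_pos (le_max_right _ _)
  have hMb : ∀ n, norm (c n) * (2 * σ) ^ n ≤ M := fun n =>
    le_trans (hM0 (Set.mem_range_self n)) (le_max_left _ _)
  refine ⟨2 * M / (2 * σ) ^ k, by positivity, fun z hz => ?_⟩
  have hzz : norm z ≤ 2 * σ := by linarith
  have hs := hsum z hzz
  have hsble := hs.summable
  have key : f z - ∑ n ∈ Finset.range k, c n * z ^ n = ∑' n, c (n + k) * z ^ (n + k) := by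
    rw [← hs.tsum_eq, ← Summable.sum_add_tsum_nat_add k hsble]
    ring
  rw [key]
  set q : ℝ := norm z / (2 * σ) with hq
  have hqnn : 0 ≤ q := by positivity
  have hq2 : q ≤ 1 / 2 := by
    rw [hq, div_le_div_iff₀ (by linarith) (by norm_num)]; linarith
  have hzq : norm z = 2 * σ * q := by
    rw [hq]; field_simp
  clear_value q
  have hterm : ∀ n, ‖c (n + k) * z ^ (n + k)‖ ≤ (M * q ^ k) * (1 / 2) ^ n := by
    intro n
    rw [norm_mul, norm_pow, hzq, mul_pow]
    calc norm (c (n + k)) * ((2 * σ) ^ (n + k) * q ^ (n + k))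
        = (norm (c (n + k)) * (2 * σ) ^ (n + k)) * (q ^ k * q ^ n) := by
          rw [pow_add]; ring
      _ ≤ M * (q ^ k * q ^ n) := by
          apply mul_le_mul_of_nonneg_right (hMb _) (by positivity)
      _ = (M * q ^ k) * q ^ n := by ring
      _ ≤ (M * q ^ k) * (1 / 2) ^ n := by
          apply mul_le_mul_of_nonneg_left (pow_le_pow_left₀ hqnn hq2 n) (by positivity)
  have hgeom : HasSum (fun n : ℕ => (M * q ^ k) * (1 / 2) ^ n) ((M * q ^ k) * 2) :=
    hasSum_geometric_two.mul_left _
  have hbound := tsum_of_norm_bounded hgeom hterm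
  calc ‖∑' n, c (n + k) * z ^ (n + k)‖ ≤ M * q ^ k * 2 := hbound
    _ = 2 * M / (2 * σ) ^ k * norm z ^ k := by
        rw [hzq, mul_pow (2 * σ) q k]
        have h2σ : ((2 * σ) ^ k : ℝ) ≠ 0 := by positivity
        field_simp


lemma pow_sub_pow_bound {B : ℝ} (hB : 1 ≤ B) :
    ∀ (j : ℕ) (x y : ℂ), norm x ≤ B → norm y ≤ B →
      norm (x ^ j - y ^ j) ≤ j * B ^ j * norm (x - y) := by
  intro j
  induction j with
  | zero => intro x y _ _; simp
  | succ j ih =>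
    intro x y hx hy
    have hB0 : (0:ℝ) ≤ B := le_trans zero_le_one hB
    have key : x ^ (j + 1) - y ^ (j + 1) = x ^ j * (x - y) + (x ^ j - y ^ j) * y := by ring
    have h1 : norm (x ^ j * (x - y)) ≤ B ^ j * norm (x - y) := by
      rw [norm_mul, norm_pow]
      exact mul_le_mul_of_nonneg_right (pow_le_pow_left₀ (norm_nonneg x) hx j)
        (norm_nonneg _)
    have h2 : norm ((x ^ j - y ^ j) * y) ≤ (j * B ^ j * norm (x - y)) * B := by
      rw [norm_mul]
      exact mul_le_mul (ih x y hx hy) hy (norm_nonneg _)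
        (by positivity)
    have hpow : B ^ j ≤ B ^ (j + 1) := pow_le_pow_right₀ hB (Nat.le_succ j)
    calc norm (x ^ (j + 1) - y ^ (j + 1))
        ≤ norm (x ^ j * (x - y)) + norm ((x ^ j - y ^ j) * y) := by
          rw [key]; exact norm_add_le _ _
      _ ≤ B ^ j * norm (x - y) + (j * B ^ j * norm (x - y)) * B :=
          add_le_add h1 h2
      _ ≤ (↑(j + 1)) * B ^ (j + 1) * norm (x - y) := by
          push_cast
          rw [pow_succ]
          have d0 : (0:ℝ) ≤ norm (x - y) := norm_nonneg _
          have h3 : B ^ j * norm (x - y) ≤ B ^ j * B * norm (x - y) := by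
            have hb : B ^ j * 1 ≤ B ^ j * B :=
              mul_le_mul_of_nonneg_left hB (pow_nonneg hB0 j)
            rw [mul_one] at hb
            exact mul_le_mul_of_nonneg_right hb d0
          nlinarith [h3, Nat.cast_nonneg (α := ℝ) j, pow_nonneg hB0 j]

/-- The Taylor series of `f` at `0`. -/
noncomputable def taylorAt (f : ℂ → ℂ) : PowerSeries ℂ :=
  PowerSeries.mk fun n => iteratedDeriv n f 0 / n.factorial

/-- Transport by holonomy: composing a function with nonzero asymptotic
expansion `φ̂` on `S₁` with a biholomorphic germ `f` fixing `0` and mapping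
`S₂ ∩ U` into `S₁` yields, near `0`, a function on `S₂` admitting the nonzero
formal substitution `φ̂ ∘ f̂` as asymptotic expansion. -/
theorem holonomy_transport (S₁ S₂ U : Set ℂ) (f φ : ℂ → ℂ) (a : ℕ → ℂ)
    (hS₁ : IsSector S₁) (hS₂ : IsSector S₂)
    (hU : IsOpen U) (h0U : (0 : ℂ) ∈ U)
    (hf : DifferentiableOn ℂ f U) (hf0 : f 0 = 0) (hf' : deriv f 0 ≠ 0)
    (hmaps : ∀ z ∈ S₂ ∩ U, f z ∈ S₁)
    (hφ : DifferentiableOn ℂ φ S₁)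
    (hasymp : ∀ k : ℕ, ∃ A : ℝ, 0 < A ∧ ∀ z ∈ S₁,
      ‖φ z - ∑ j ∈ Finset.range k, a j * z ^ j‖ ≤ A * ‖z‖ ^ k)
    (hnonzero : PowerSeries.mk a ≠ 0) :
    pscomp (PowerSeries.mk a) (taylorAt f) ≠ 0 ∧
    ∃ r : ℝ, 0 < r ∧ ∀ k : ℕ, ∃ A : ℝ, 0 < A ∧
      ∀ z ∈ S₂, ‖z‖ < r →
        ‖φ (f z) - ∑ j ∈ Finset.range k,
            (PowerSeries.coeff j (pscomp (PowerSeries.mk a) (taylorAt f))) * z ^ j‖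
          ≤ A * ‖z‖ ^ k := by
  have hconst : PowerSeries.constantCoeff (taylorAt f) = 0 := by
    rw [← PowerSeries.coeff_zero_eq_constantCoeff]
    simp [taylorAt, iteratedDeriv_zero, hf0]
  have hc1 : PowerSeries.coeff 1 (taylorAt f) = deriv f 0 := by
    simp [taylorAt, iteratedDeriv_one]
  have hcoeffcomp : ∀ n, PowerSeries.coeff n (pscomp (PowerSeries.mk a) (taylorAt f))
      = ∑ j ∈ Finset.range (n + 1), a j * PowerSeries.coeff n ((taylorAt f) ^ j) := by
    intro n; simp [pscomp]
  constructor
  · -- nonvanishing of the composed series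
    have hex : ∃ n, a n ≠ 0 := by
      by_contra h; push_neg at h
      exact hnonzero (by ext n; simp [h n])
    intro hzero
    set m := Nat.find hex with hm
    have ham : a m ≠ 0 := Nat.find_spec hex
    have hcoeff : PowerSeries.coeff m (pscomp (PowerSeries.mk a) (taylorAt f))
        = a m * (deriv f 0) ^ m := by
      rw [hcoeffcomp, Finset.sum_eq_single m]
      · rw [coeff_pow_self hconst, hc1]
      · intro j hj hne
        have hjm : j < m := lt_of_le_of_ne (Nat.lt_succ_iff.mp (Finset.mem_range.mp hj)) hne
        have haj : a j = 0 := by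
          by_contra haj; exact (Nat.find_min hex hjm) haj
        rw [haj, zero_mul]
      · intro h; exact absurd (Finset.self_mem_range_succ m) h
    rw [hzero, map_zero] at hcoeff
    exact (mul_ne_zero ham (pow_ne_zero m hf')) hcoeff.symm
  · -- the asymptotic expansion of the composition
    obtain ⟨ρ, hρpos, hball⟩ := Metric.mem_nhds_iff.mp (hU.mem_nhds h0U)
    set σ := ρ / 4 with hσdef
    have hσ : 0 < σ := by positivity
    have hball3 : Metric.ball (0 : ℂ) (3 * σ) ⊆ U := fun z hz => hball (by
      rw [Metric.mem_ball] at hz ⊢; rw [hσdef] at hz; linarith)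
    have hfd : DifferentiableOn ℂ f (Metric.ball 0 (3 * σ)) := hf.mono hball3
    have htay := taylor_remainder hσ hfd
    obtain ⟨C0', hC0'pos, hC0'⟩ := htay 1
    set C0 : ℝ := max C0' 1 with hC0def
    have hC0pos : 0 < C0 := lt_of_lt_of_le one_pos (le_max_right _ _)
    have hfz : ∀ z : ℂ, norm z ≤ σ → norm (f z) ≤ C0 * norm z := by
      intro z hz
      have h := hC0' z hz
      simp only [Finset.range_one, Finset.sum_singleton, pow_zero, mul_one,
        iteratedDeriv_zero, hf0, Nat.factorial_zero, Nat.cast_one, zero_div, sub_zero,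
        pow_one] at h
      calc norm (f z) ≤ C0' * norm z := h
        _ ≤ C0 * norm z :=
          mul_le_mul_of_nonneg_right (le_max_left _ _) (norm_nonneg z)
    have hzmemU : ∀ z : ℂ, norm z ≤ σ → z ∈ U := by
      intro z hz
      apply hball
      rw [Metric.mem_ball, dist_zero_right]
      rw [hσdef] at hz; linarith
    refine ⟨min σ 1, lt_min hσ one_pos, fun k => ?_⟩
    obtain ⟨Ak, hAkpos, hAkb⟩ := hasymp k
    rcases Nat.eq_zero_or_pos k with hk0 | hkpos
    · subst hk0
      refine ⟨Ak, hAkpos, fun z hzS hzr => ?_⟩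
      have hzσ : norm z ≤ σ := le_of_lt (lt_of_lt_of_le hzr (min_le_left _ _))
      have h := hAkb (f z) (hmaps z ⟨hzS, hzmemU z hzσ⟩)
      simpa using h
    · obtain ⟨C1, hC1pos, hC1⟩ := htay k
      -- key estimate for each power of f
      have sub : ∀ j : ℕ, ∃ D : ℝ, 0 < D ∧ ∀ z : ℂ, norm z ≤ σ → norm z ≤ 1 →
          norm ((f z) ^ j - ∑ n ∈ Finset.range k,
            PowerSeries.coeff n ((taylorAt f) ^ j) * z ^ n) ≤ D * norm z ^ k := by
        intro j
        set F : Polynomial ℂ := PowerSeries.trunc k (taylorAt f) with hF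
        have hdegF : F.natDegree < k := by
          obtain ⟨k', rfl⟩ := Nat.exists_eq_succ_of_ne_zero (Nat.pos_iff_ne_zero.mp hkpos)
          exact PowerSeries.natDegree_trunc_lt _ _
        have hTeval : ∀ z : ℂ, F.eval z
            = ∑ n ∈ Finset.range k, PowerSeries.coeff n (taylorAt f) * z ^ n := by
          intro z
          rw [Polynomial.eval_eq_sum_range' hdegF]
          refine Finset.sum_congr rfl fun n hn => ?_
          rw [← Polynomial.coeff_coe,
            PowerSeries.coeff_coe_trunc_of_lt (Finset.mem_range.mp hn)]
        have hrem : ∀ z : ℂ, norm z ≤ σ →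
            norm (f z - F.eval z) ≤ C1 * norm z ^ k := by
          intro z hz
          have h := hC1 z hz
          rw [hTeval]
          have he : ∑ n ∈ Finset.range k, PowerSeries.coeff n (taylorAt f) * z ^ n
              = ∑ n ∈ Finset.range k, (iteratedDeriv n f 0 / n.factorial) * z ^ n := by
            refine Finset.sum_congr rfl fun n _ => ?_
            simp [taylorAt]
          rw [he]; exact h
        set B : ℝ := C0 * σ + ∑ n ∈ Finset.range k,
          norm (PowerSeries.coeff n (taylorAt f)) * σ ^ n + 1 with hBdef
        have hsumnn : 0 ≤ ∑ n ∈ Finset.range k,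
            norm (PowerSeries.coeff n (taylorAt f)) * σ ^ n :=
          Finset.sum_nonneg fun n _ => by positivity
        have hB1 : 1 ≤ B := by
          rw [hBdef]; nlinarith [mul_nonneg (le_of_lt hC0pos) (le_of_lt hσ)]
        have hfB : ∀ z : ℂ, norm z ≤ σ → norm (f z) ≤ B := by
          intro z hz
          calc norm (f z) ≤ C0 * norm z := hfz z hz
            _ ≤ C0 * σ := mul_le_mul_of_nonneg_left hz (le_of_lt hC0pos)
            _ ≤ B := by rw [hBdef]; linarith
        have hTB : ∀ z : ℂ, norm z ≤ σ → norm (F.eval z) ≤ B := by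
          intro z hz
          rw [hTeval]
          calc norm (∑ n ∈ Finset.range k, PowerSeries.coeff n (taylorAt f) * z ^ n)
              ≤ ∑ n ∈ Finset.range k,
                norm (PowerSeries.coeff n (taylorAt f) * z ^ n) :=
              norm_sum_le _ _
            _ ≤ ∑ n ∈ Finset.range k,
                norm (PowerSeries.coeff n (taylorAt f)) * σ ^ n := by
              refine Finset.sum_le_sum fun n _ => ?_
              rw [norm_mul, norm_pow]
              exact mul_le_mul_of_nonneg_left
                (pow_le_pow_left₀ (norm_nonneg z) hz n) (norm_nonneg _)
            _ ≤ B := by rw [hBdef]; nlinarith [mul_nonneg (le_of_lt hC0pos) (le_of_lt hσ)]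
        set N : ℕ := j * k + k with hNdef
        have hdegFj : (F ^ j).natDegree < N := by
          calc (F ^ j).natDegree ≤ j * F.natDegree := Polynomial.natDegree_pow_le
            _ ≤ j * k := Nat.mul_le_mul_left j (le_of_lt hdegF)
            _ < N := by omega
        have hFj : ∀ z : ℂ, (F.eval z) ^ j = ∑ n ∈ Finset.range N, (F ^ j).coeff n * z ^ n := by
          intro z; rw [← Polynomial.eval_pow, Polynomial.eval_eq_sum_range' hdegFj]
        have hcoef_eq : ∀ n < k, (F ^ j).coeff n
            = PowerSeries.coeff n ((taylorAt f) ^ j) := by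
          intro n hn
          have h1 : (F ^ j).coeff n = PowerSeries.coeff n ((F : PowerSeries ℂ) ^ j) := by
            rw [← Polynomial.coe_pow, Polynomial.coeff_coe]
          rw [h1]
          exact coeff_pow_congr
            (fun m hm => PowerSeries.coeff_coe_trunc_of_lt hm) j n hn
        set TC : ℝ := ∑ n ∈ Finset.range N, norm ((F ^ j).coeff n) with hTCdef
        have hTCnn : 0 ≤ TC := Finset.sum_nonneg fun n _ => norm_nonneg _
        refine ⟨j * B ^ j * C1 + TC + 1, by positivity, fun z hzσ hz1 => ?_⟩
        have split : (f z) ^ j - ∑ n ∈ Finset.range k,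
              PowerSeries.coeff n ((taylorAt f) ^ j) * z ^ n
            = ((f z) ^ j - (F.eval z) ^ j)
              + (∑ n ∈ Finset.range N, (F ^ j).coeff n * z ^ n
                - ∑ n ∈ Finset.range k, PowerSeries.coeff n ((taylorAt f) ^ j) * z ^ n) := by
          rw [← hFj]; ring
        have hkN : k ≤ N := by omega
        have hsub2 : ∑ n ∈ Finset.range N, (F ^ j).coeff n * z ^ n
            - ∑ n ∈ Finset.range k, PowerSeries.coeff n ((taylorAt f) ^ j) * z ^ n
            = ∑ n ∈ Finset.range N \ Finset.range k, (F ^ j).coeff n * z ^ n := by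
          rw [← Finset.sum_sdiff (Finset.range_subset_range.mpr hkN)]
          have he : ∑ n ∈ Finset.range k, PowerSeries.coeff n ((taylorAt f) ^ j) * z ^ n
              = ∑ n ∈ Finset.range k, (F ^ j).coeff n * z ^ n := by
            refine Finset.sum_congr rfl fun n hn => ?_
            rw [hcoef_eq n (Finset.mem_range.mp hn)]
          rw [he]; ring
        have hpiece1 : norm ((f z) ^ j - (F.eval z) ^ j)
            ≤ (j * B ^ j * C1) * norm z ^ k := by
          calc norm ((f z) ^ j - (F.eval z) ^ j)
              ≤ j * B ^ j * norm (f z - F.eval z) :=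
              pow_sub_pow_bound hB1 j _ _ (hfB z hzσ) (hTB z hzσ)
            _ ≤ j * B ^ j * (C1 * norm z ^ k) :=
              mul_le_mul_of_nonneg_left (hrem z hzσ) (by positivity)
            _ = (j * B ^ j * C1) * norm z ^ k := by ring
        have hpiece2 : norm (∑ n ∈ Finset.range N \ Finset.range k,
              (F ^ j).coeff n * z ^ n) ≤ TC * norm z ^ k := by
          calc norm (∑ n ∈ Finset.range N \ Finset.range k, (F ^ j).coeff n * z ^ n)
              ≤ ∑ n ∈ Finset.range N \ Finset.range k,
                norm ((F ^ j).coeff n * z ^ n) := norm_sum_le _ _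
            _ ≤ ∑ n ∈ Finset.range N \ Finset.range k,
                norm ((F ^ j).coeff n) * norm z ^ k := by
              refine Finset.sum_le_sum fun n hn => ?_
              rw [norm_mul, norm_pow]
              refine mul_le_mul_of_nonneg_left ?_ (norm_nonneg _)
              have hkn : k ≤ n := by
                rcases Finset.mem_sdiff.mp hn with ⟨_, hnk⟩
                simp only [Finset.mem_range, not_lt] at hnk
                exact hnk
              exact pow_le_pow_of_le_one (norm_nonneg z) hz1 hkn
            _ ≤ TC * norm z ^ k := by
              rw [← Finset.sum_mul]
              refine mul_le_mul_of_nonneg_right ?_ (by positivity)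
              exact Finset.sum_le_sum_of_subset_of_nonneg (Finset.sdiff_subset)
                fun n _ _ => norm_nonneg _
        calc norm ((f z) ^ j - ∑ n ∈ Finset.range k,
              PowerSeries.coeff n ((taylorAt f) ^ j) * z ^ n)
            ≤ norm ((f z) ^ j - (F.eval z) ^ j)
              + norm (∑ n ∈ Finset.range N \ Finset.range k,
                (F ^ j).coeff n * z ^ n) := by
              rw [split, hsub2]; exact norm_add_le _ _
          _ ≤ (j * B ^ j * C1) * norm z ^ k + TC * norm z ^ k :=
            add_le_add hpiece1 hpiece2
          _ ≤ (j * B ^ j * C1 + TC + 1) * norm z ^ k := by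
            have : (0:ℝ) ≤ norm z ^ k := by positivity
            nlinarith
      choose D hDpos hD using sub
      have hDsum : 0 ≤ ∑ j ∈ Finset.range k, norm (a j) * D j :=
        Finset.sum_nonneg fun j _ => mul_nonneg (norm_nonneg _) (le_of_lt (hDpos j))
      have hApos : 0 < Ak * C0 ^ k + ∑ j ∈ Finset.range k, norm (a j) * D j + 1 := by
        have : 0 < Ak * C0 ^ k := by positivity
        linarith
      refine ⟨Ak * C0 ^ k + ∑ j ∈ Finset.range k, norm (a j) * D j + 1, hApos,
        fun z hzS hzr => ?_⟩
      have hzσ : norm z ≤ σ := le_of_lt (lt_of_lt_of_le hzr (min_le_left _ _))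
      have hz1 : norm z ≤ 1 := le_of_lt (lt_of_lt_of_le hzr (min_le_right _ _))
      have hfzS1 : f z ∈ S₁ := hmaps z ⟨hzS, hzmemU z hzσ⟩
      have hbsum : ∑ n ∈ Finset.range k,
            PowerSeries.coeff n (pscomp (PowerSeries.mk a) (taylorAt f)) * z ^ n
          = ∑ j ∈ Finset.range k, a j *
            ∑ n ∈ Finset.range k, PowerSeries.coeff n ((taylorAt f) ^ j) * z ^ n := by
        have step1 : ∀ n ∈ Finset.range k,
            PowerSeries.coeff n (pscomp (PowerSeries.mk a) (taylorAt f)) * z ^ n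
            = ∑ j ∈ Finset.range k,
              a j * PowerSeries.coeff n ((taylorAt f) ^ j) * z ^ n := by
          intro n hn
          rw [hcoeffcomp n, Finset.sum_mul]
          refine Finset.sum_subset (Finset.range_subset_range.mpr (Finset.mem_range.mp hn))
            fun j _ hnj => ?_
          have hnj' : n < j := by
            simp only [Finset.mem_range, not_lt] at hnj; omega
          rw [coeff_pow_zero_of_lt hconst hnj', mul_zero, zero_mul]
        rw [Finset.sum_congr rfl step1, Finset.sum_comm]
        refine Finset.sum_congr rfl fun j _ => ?_
        rw [Finset.mul_sum]
        exact Finset.sum_congr rfl fun n _ => by ring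
      have hmain : φ (f z) - ∑ n ∈ Finset.range k,
            PowerSeries.coeff n (pscomp (PowerSeries.mk a) (taylorAt f)) * z ^ n
          = (φ (f z) - ∑ j ∈ Finset.range k, a j * (f z) ^ j)
            + ∑ j ∈ Finset.range k, a j * ((f z) ^ j - ∑ n ∈ Finset.range k,
                PowerSeries.coeff n ((taylorAt f) ^ j) * z ^ n) := by
        rw [hbsum]
        simp only [mul_sub]
        rw [Finset.sum_sub_distrib]
        ring
      have hterm1 : norm (φ (f z) - ∑ j ∈ Finset.range k, a j * (f z) ^ j)
          ≤ Ak * (C0 * norm z) ^ k := by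
        calc norm (φ (f z) - ∑ j ∈ Finset.range k, a j * (f z) ^ j)
            ≤ Ak * norm (f z) ^ k := hAkb (f z) hfzS1
          _ ≤ Ak * (C0 * norm z) ^ k :=
            mul_le_mul_of_nonneg_left
              (pow_le_pow_left₀ (norm_nonneg _) (hfz z hzσ) k) (le_of_lt hAkpos)
      have hterm2 : norm (∑ j ∈ Finset.range k, a j * ((f z) ^ j -
            ∑ n ∈ Finset.range k, PowerSeries.coeff n ((taylorAt f) ^ j) * z ^ n))
          ≤ (∑ j ∈ Finset.range k, norm (a j) * D j) * norm z ^ k := by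
        calc norm (∑ j ∈ Finset.range k, a j * ((f z) ^ j -
              ∑ n ∈ Finset.range k, PowerSeries.coeff n ((taylorAt f) ^ j) * z ^ n))
            ≤ ∑ j ∈ Finset.range k, norm (a j * ((f z) ^ j -
              ∑ n ∈ Finset.range k, PowerSeries.coeff n ((taylorAt f) ^ j) * z ^ n)) :=
            norm_sum_le _ _
          _ ≤ ∑ j ∈ Finset.range k, norm (a j) * (D j * norm z ^ k) := by
            refine Finset.sum_le_sum fun j _ => ?_
            rw [norm_mul]
            exact mul_le_mul_of_nonneg_left (hD j z hzσ hz1) (norm_nonneg _)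
          _ = (∑ j ∈ Finset.range k, norm (a j) * D j) * norm z ^ k := by
            rw [Finset.sum_mul]
            exact Finset.sum_congr rfl fun j _ => by ring
      rw [hmain]
      calc norm ((φ (f z) - ∑ j ∈ Finset.range k, a j * (f z) ^ j)
            + ∑ j ∈ Finset.range k, a j * ((f z) ^ j - ∑ n ∈ Finset.range k,
                PowerSeries.coeff n ((taylorAt f) ^ j) * z ^ n))
          ≤ norm (φ (f z) - ∑ j ∈ Finset.range k, a j * (f z) ^ j)
            + norm (∑ j ∈ Finset.range k, a j * ((f z) ^ j - ∑ n ∈ Finset.range k,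
                PowerSeries.coeff n ((taylorAt f) ^ j) * z ^ n)) := norm_add_le _ _
        _ ≤ Ak * (C0 * norm z) ^ k
            + (∑ j ∈ Finset.range k, norm (a j) * D j) * norm z ^ k :=
          add_le_add hterm1 hterm2
        _ = (Ak * C0 ^ k + ∑ j ∈ Finset.range k, norm (a j) * D j)
            * norm z ^ k := by rw [mul_pow]; ring
        _ ≤ (Ak * C0 ^ k + ∑ j ∈ Finset.range k, norm (a j) * D j + 1)
            * norm z ^ k := by
          have h0 : (0:ℝ) ≤ norm z ^ k := by positivity
          nlinarith
end
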